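/- arXiv:2302.13949 — 2 statements merged into one kernel-verified Lean document; each statement's English description precedes it below -/
import Mathlib

section
/- Let G be a graph on n vertices containing at least c·n² pairwise edge-disjoint triangles for some constant c > 0. Then G contains at least c'·n³ triangles, where c' > 0 depends only on c. -/
open SimpleGraph Finset

/-- Ruzsa–Szemerédi corollary: a graph on `n` vertices with at least `c·n²`
pairwise edge-disjoint triangles contains at least `c'·n³` triangles. -/
theorem stmt0 :
    ∀ c : ℝ, 0 < c → ∃ c' : ℝ, 0 < c' ∧
      ∀ (n : ℕ) (G : SimpleGraph (Fin n)) [DecidableRel G.Adj]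
        (D : Finset (Finset (Fin n))),
        (∀ t ∈ D, G.IsNClique 3 t) →
        (∀ t ∈ D, ∀ t' ∈ D, t ≠ t' → (t ∩ t').card ≤ 1) →
        c * (n : ℝ) ^ 2 ≤ (D.card : ℝ) →
        c' * (n : ℝ) ^ 3 ≤ ((G.cliqueFinset 3).card : ℝ) := by
  intro c hc
  set ε : ℝ := min c 1 with hε
  have hε0 : 0 < ε := lt_min hc one_pos
  refine ⟨SimpleGraph.triangleRemovalBound ε, triangleRemovalBound_pos hε0, ?_⟩
  intro n G _ D hclique hdisj hbig
  have hfar : G.FarFromTriangleFree ε := by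
    apply farFromTriangleFree_of_disjoint_triangles D
    · intro t ht
      exact mem_cliqueFinset_iff.2 (hclique t ht)
    · intro t ht t' ht' hne
      rw [← Finset.coe_inter]
      exact Finset.card_le_one.1 (hdisj t ht t' ht' hne)
    · calc (ε * ((Fintype.card (Fin n)) ^ 2 : ℕ) : ℝ)
          ≤ c * (n : ℝ) ^ 2 := by
            simp only [Fintype.card_fin]
            push_cast
            gcongr
            exact min_le_left _ _
        _ ≤ D.card := hbig
  have := hfar.le_card_cliqueFinset
  simpa using this
end

section
/- Any finite strictly convex set S of points in the plane can be partitioned into three sets S₁, S₂, S₃ such that each S_i, after an appropriate rotation, lies on an x-monotone strictly convex curve whose translates pairwise intersect in at most one point. -/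
/-- Rotation of the plane by angle `θ`. -/
noncomputable def rot (θ : ℝ) (p : ℝ × ℝ) : ℝ × ℝ :=
  (Real.cos θ * p.1 - Real.sin θ * p.2, Real.sin θ * p.1 + Real.cos θ * p.2)

open Real Set


lemma four_pt {f : ℝ → ℝ} (hf : StrictConvexOn ℝ Set.univ f) {u x y w : ℝ}
    (h1 : u < x) (h2 : x < w) (h3 : u < y) (h4 : y < w) (h5 : x + y = u + w) :
    f x + f y < f u + f w := by
  set l := (w - x) / (w - u) with hl
  have hwu : 0 < w - u := by linarith
  have hl0 : 0 < l := div_pos (by linarith) hwu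
  have hl1 : l < 1 := (div_lt_one hwu).2 (by linarith)
  have hc : l * (w - u) = w - x := div_mul_cancel₀ _ hwu.ne'
  have hx : l * u + (1 - l) * w = x := by linear_combination (-1 : ℝ) * hc
  have hy : (1 - l) * u + l * w = y := by linear_combination hc - h5
  have Hx := hf.2 (mem_univ u) (mem_univ w) (show u ≠ w by linarith) hl0
    (show (0:ℝ) < 1 - l by linarith) (show l + (1 - l) = 1 by ring)
  have Hy := hf.2 (mem_univ u) (mem_univ w) (show u ≠ w by linarith)
    (show (0:ℝ) < 1 - l by linarith) hl0 (show (1 - l) + l = 1 by ring)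
  simp only [smul_eq_mul] at Hx Hy
  rw [hx] at Hx
  rw [hy] at Hy
  linarith

lemma translate_subsingleton {f : ℝ → ℝ} (hf : StrictConvexOn ℝ Set.univ f) :
    ∀ v : ℝ × ℝ, v ≠ 0 → {x : ℝ | f x = f (x - v.1) + v.2}.Subsingleton := by
  intro v hv
  have key : ∀ a b : ℝ, f a = f (a - v.1) + v.2 → f b = f (b - v.1) + v.2 → a < b → False := by
    intro a b ha hb hab
    rcases lt_trichotomy v.1 0 with ht | ht | ht
    · have := four_pt hf (u := a) (x := b) (y := a - v.1) (w := b - v.1)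
        hab (by linarith) (by linarith) (by linarith) (by ring)
      linarith
    · have h2 : v.2 ≠ 0 := by
        intro h2; exact hv (Prod.ext ht h2)
      rw [ht] at ha; simp at ha; exact h2 ha
    · have := four_pt hf (u := a - v.1) (x := a) (y := b - v.1) (w := b)
        (by linarith) (by linarith) (by linarith) (by linarith) (by ring)
      linarith
  intro a ha b hb
  simp only [mem_setOf_eq] at ha hb
  by_contra hne
  rcases lt_or_gt_of_ne hne with h | h
  · exact key a b ha hb h
  · exact key b a hb ha h


lemma quad_strict {e m c a : ℝ} (he : 0 < e) :
    StrictConvexOn ℝ Set.univ (fun x => e * (x - a) ^ 2 + m * (x - a) + c) := by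
  refine ⟨convex_univ, ?_⟩
  intro x _ y _ hxy s t hs ht hst
  simp only [smul_eq_mul]
  have hxy2 : 0 < (x - y) ^ 2 := sq_pos_of_ne_zero (sub_ne_zero.2 hxy)
  have hs1 : s = 1 - t := by linarith
  subst hs1
  nlinarith [mul_pos (mul_pos (mul_pos he hs) ht) hxy2]

lemma sup'_strictConvexOn {α : Type*} (T : Finset α) (hT : T.Nonempty) (g : α → ℝ → ℝ)
    (hg : ∀ p ∈ T, StrictConvexOn ℝ Set.univ (g p)) :
    StrictConvexOn ℝ Set.univ (fun x => T.sup' hT (fun p => g p x)) := by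
  induction hT using Finset.Nonempty.cons_induction with
  | singleton a => simpa using hg a (by simp)
  | cons a s ha hs ih =>
    simp only [Finset.sup'_cons (H := hs)]
    exact (hg a (by simp)).sup (ih (fun p hp => hg p (by simp [hp])))

lemma sup'_continuous {α : Type*} (T : Finset α) (hT : T.Nonempty) (g : α → ℝ → ℝ)
    (hg : ∀ p ∈ T, Continuous (g p)) :
    Continuous (fun x => T.sup' hT (fun p => g p x)) := by
  induction hT using Finset.Nonempty.cons_induction with
  | singleton a => simpa using hg a (by simp)
  | cons a s ha hs ih =>
    simp only [Finset.sup'_cons (H := hs)]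
    exact (hg a (by simp)).max (ih (fun p hp => hg p (by simp [hp])))

lemma exists_support_slope (T : Finset (ℝ × ℝ)) (v : ℝ × ℝ → ℝ) (p : ℝ × ℝ)
    (hdist : ∀ q ∈ T, q.1 = p.1 → q = p)
    (hconv : ∀ q ∈ T, ∀ r ∈ T, q.1 < p.1 → p.1 < r.1 →
      (v p - v q) * (r.1 - q.1) ≤ (v r - v q) * (p.1 - q.1)) :
    ∃ M : ℝ, ∀ q ∈ T, v p + M * (q.1 - p.1) ≤ v q := by
  classical
  set L := T.filter (fun q => q.1 < p.1) with hLdef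
  set R := T.filter (fun q => p.1 < q.1) with hRdef
  have hmain : ∀ M : ℝ, (∀ q ∈ L, v p + M * (q.1 - p.1) ≤ v q) →
      (∀ q ∈ R, v p + M * (q.1 - p.1) ≤ v q) → ∀ q ∈ T, v p + M * (q.1 - p.1) ≤ v q := by
    intro M h1 h2 q hq
    rcases lt_trichotomy q.1 p.1 with h | h | h
    · exact h1 q (Finset.mem_filter.2 ⟨hq, h⟩)
    · rw [hdist q hq h, sub_self, mul_zero, add_zero]
    · exact h2 q (Finset.mem_filter.2 ⟨hq, h⟩)
  by_cases hL : L.Nonempty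
  · obtain ⟨a, haL, ha⟩ := L.exists_max_image (fun q => (v p - v q) / (p.1 - q.1)) hL
    have haT : a ∈ T := (Finset.mem_filter.1 haL).1
    have hax : a.1 < p.1 := (Finset.mem_filter.1 haL).2
    have hda : 0 < p.1 - a.1 := by linarith
    refine ⟨(v p - v a) / (p.1 - a.1), hmain _ ?_ ?_⟩
    · intro q hq
      have hqx : q.1 < p.1 := (Finset.mem_filter.1 hq).2
      have hdq : 0 < p.1 - q.1 := by linarith
      have h1 := ha q hq
      rw [div_le_div_iff₀ hdq hda] at h1
      -- h1 : (v p - v q) * (p.1 - a.1) ≤ (v p - v a) * (p.1 - q.1)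
      rw [← sub_nonneg]
      have key : v q - (v p + (v p - v a) / (p.1 - a.1) * (q.1 - p.1))
          = ((v p - v a) * (p.1 - q.1) - (v p - v q) * (p.1 - a.1)) / (p.1 - a.1) := by
        field_simp
        ring
      rw [key]
      exact div_nonneg (by linarith) hda.le
    · intro q hq
      have hqx : p.1 < q.1 := (Finset.mem_filter.1 hq).2
      have hconvq := hconv a haT q (Finset.mem_filter.1 hq).1 hax hqx
      rw [← sub_nonneg]
      have key : v q - (v p + (v p - v a) / (p.1 - a.1) * (q.1 - p.1))
          = ((v q - v a) * (p.1 - a.1) - (v p - v a) * (q.1 - a.1)) / (p.1 - a.1) := by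
        field_simp
        ring
      rw [key]
      exact div_nonneg (by linarith) hda.le
  · by_cases hR : R.Nonempty
    · obtain ⟨b, hbR, hb⟩ := R.exists_min_image (fun q => (v q - v p) / (q.1 - p.1)) hR
      have hbx : p.1 < b.1 := (Finset.mem_filter.1 hbR).2
      have hdb : 0 < b.1 - p.1 := by linarith
      refine ⟨(v b - v p) / (b.1 - p.1), hmain _ ?_ ?_⟩
      · intro q hq; exact absurd (⟨q, hq⟩ : L.Nonempty) hL
      · intro q hq
        have hqx : p.1 < q.1 := (Finset.mem_filter.1 hq).2
        have hdq : 0 < q.1 - p.1 := by linarith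
        have h1 := hb q hq
        rw [div_le_div_iff₀ hdb hdq] at h1
        rw [← sub_nonneg]
        have key : v q - (v p + (v b - v p) / (b.1 - p.1) * (q.1 - p.1))
            = ((v q - v p) * (b.1 - p.1) - (v b - v p) * (q.1 - p.1)) / (b.1 - p.1) := by
          field_simp
          ring
        rw [key]
        exact div_nonneg (by linarith) hdb.le
    · refine ⟨0, hmain 0 ?_ ?_⟩
      · intro q hq; exact absurd (⟨q, hq⟩ : L.Nonempty) hL
      · intro q hq; exact absurd (⟨q, hq⟩ : R.Nonempty) hR

lemma eps_choice (T : Finset (ℝ × ℝ))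
    (hconv : ∀ a ∈ T, ∀ b ∈ T, ∀ c ∈ T, a.1 < b.1 → b.1 < c.1 →
      (b.2 - a.2) * (c.1 - a.1) < (c.2 - a.2) * (b.1 - a.1)) :
    ∃ ε : ℝ, 0 < ε ∧ ∀ a ∈ T, ∀ b ∈ T, ∀ c ∈ T, a.1 < b.1 → b.1 < c.1 →
      ε * ((b.1 - a.1) * (c.1 - a.1) * (c.1 - b.1)) ≤
        (c.2 - a.2) * (b.1 - a.1) - (b.2 - a.2) * (c.1 - a.1) := by
  classical
  set TT := (T ×ˢ T ×ˢ T).filter (fun t => t.1.1 < t.2.1.1 ∧ t.2.1.1 < t.2.2.1) with hTT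
  set F := insert (1:ℝ) (TT.image fun t =>
    ((t.2.2.2 - t.1.2) * (t.2.1.1 - t.1.1) - (t.2.1.2 - t.1.2) * (t.2.2.1 - t.1.1)) /
    ((t.2.1.1 - t.1.1) * (t.2.2.1 - t.1.1) * (t.2.2.1 - t.2.1.1))) with hF
  have hFne : F.Nonempty := ⟨1, Finset.mem_insert_self _ _⟩
  refine ⟨F.min' hFne, ?_, ?_⟩
  · rw [Finset.lt_min'_iff]
    intro y hy
    rcases Finset.mem_insert.1 hy with rfl | hy
    · norm_num
    · obtain ⟨t, ht, rfl⟩ := Finset.mem_image.1 hy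
      obtain ⟨hmem, h1, h2⟩ := Finset.mem_filter.1 ht
      simp only [Finset.mem_product] at hmem
      obtain ⟨ha, hb, hc⟩ := hmem
      have hgap := hconv t.1 ha t.2.1 hb t.2.2 hc h1 h2
      have hK : 0 < (t.2.1.1 - t.1.1) * (t.2.2.1 - t.1.1) * (t.2.2.1 - t.2.1.1) :=
        mul_pos (mul_pos (by linarith) (by linarith)) (by linarith)
      exact div_pos (by linarith) hK
  · intro a ha b hb c hc h1 h2
    have hmem : ((c.2 - a.2) * (b.1 - a.1) - (b.2 - a.2) * (c.1 - a.1)) /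
        ((b.1 - a.1) * (c.1 - a.1) * (c.1 - b.1)) ∈ F :=
      Finset.mem_insert_of_mem (Finset.mem_image.2 ⟨(a, b, c),
        Finset.mem_filter.2 ⟨Finset.mem_product.2 ⟨ha, Finset.mem_product.2 ⟨hb, hc⟩⟩,
          ⟨h1, h2⟩⟩, rfl⟩)
    have hle := Finset.min'_le F _ hmem
    have hK : 0 < (b.1 - a.1) * (c.1 - a.1) * (c.1 - b.1) :=
      mul_pos (mul_pos (by linarith) (by linarith)) (by linarith)
    rw [le_div_iff₀ hK] at hle
    exact hle

lemma interp (T : Finset (ℝ × ℝ))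
    (hdist : ∀ p ∈ T, ∀ q ∈ T, p.1 = q.1 → p = q)
    (hconv : ∀ a ∈ T, ∀ b ∈ T, ∀ c ∈ T, a.1 < b.1 → b.1 < c.1 →
      (b.2 - a.2) * (c.1 - a.1) < (c.2 - a.2) * (b.1 - a.1)) :
    ∃ f : ℝ → ℝ, StrictConvexOn ℝ Set.univ f ∧ Continuous f ∧ ∀ p ∈ T, p.2 = f p.1 := by
  classical
  obtain ⟨ε, hε, hεle⟩ := eps_choice T hconv
  have hsupp : ∀ p ∈ T, ∃ M : ℝ, ∀ q ∈ T, (p.2 - ε * p.1 ^ 2) + M * (q.1 - p.1) ≤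
      q.2 - ε * q.1 ^ 2 := by
    intro p hp
    apply exists_support_slope T (fun q => q.2 - ε * q.1 ^ 2) p (fun q hq h => hdist q hq p hp h)
    intro q hq r hr h1 h2
    have h3 := hεle q hq p hp r hr h1 h2
    nlinarith [h3]
  choose! M hM using hsupp
  by_cases hT : T.Nonempty
  · set g : ℝ × ℝ → ℝ → ℝ :=
      fun p x => ε * (x - p.1) ^ 2 + (M p + 2 * ε * p.1) * (x - p.1) + p.2 with hg
    have hcont : ∀ p ∈ T, Continuous (g p) := by
      intro p _
      simp only [hg]
      fun_prop
    have hstrict : ∀ p ∈ T, StrictConvexOn ℝ Set.univ (g p) := fun p _ => quad_strict hε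
    refine ⟨fun x => T.sup' hT (fun p => g p x),
      sup'_strictConvexOn T hT g hstrict, sup'_continuous T hT g hcont, ?_⟩
    intro p hp
    show p.2 = T.sup' hT fun q => g q p.1
    apply le_antisymm
    · have h0 : g p p.1 = p.2 := by simp only [hg]; ring
      calc p.2 = g p p.1 := h0.symm
        _ ≤ _ := Finset.le_sup' (fun q => g q p.1) hp
    · apply Finset.sup'_le
      intro q hq
      have h4 := hM q hq p hp
      simp only [hg]
      nlinarith [h4]
  · refine ⟨fun x => x ^ 2, Even.strictConvexOn_pow even_two two_ne_zero, continuous_pow 2, ?_⟩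
    intro p hp
    exact absurd ⟨p, hp⟩ hT


lemma classify_lemma (S : Finset (ℝ × ℝ)) (θ : ℝ) (p : ℝ × ℝ) (hp : p ∈ S)
    (hext : p ∈ Set.extremePoints ℝ (convexHull ℝ (S : Set (ℝ × ℝ)))) :
    (∀ q ∈ S, ∀ r ∈ S, (rot θ q).1 < (rot θ p).1 → (rot θ p).1 < (rot θ r).1 →
        ((rot θ p).2 - (rot θ q).2) * ((rot θ r).1 - (rot θ q).1) <
        ((rot θ r).2 - (rot θ q).2) * ((rot θ p).1 - (rot θ q).1)) ∨
    (∀ q ∈ S, ∀ r ∈ S, (rot θ q).1 < (rot θ p).1 → (rot θ p).1 < (rot θ r).1 →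
        ((rot θ r).2 - (rot θ q).2) * ((rot θ p).1 - (rot θ q).1) <
        ((rot θ p).2 - (rot θ q).2) * ((rot θ r).1 - (rot θ q).1)) := by
  classical
  by_cases hA : ((S : Set (ℝ × ℝ)) \ {p}).Nonempty
  · -- separation
    have hclosed : IsClosed (convexHull ℝ ((S : Set (ℝ × ℝ)) \ {p})) :=
      S.finite_toSet.diff.isClosed_convexHull (𝕜 := ℝ)
    have hnot : p ∉ convexHull ℝ ((S : Set (ℝ × ℝ)) \ {p}) := by
      intro hmem
      have h1 : convexHull ℝ ((S : Set (ℝ × ℝ)) \ {p}) ⊆ convexHull ℝ (S : Set (ℝ × ℝ)) :=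
        convexHull_mono diff_subset
      have h2 := inter_extremePoints_subset_extremePoints_of_subset h1 ⟨hmem, hext⟩
      exact (extremePoints_convexHull_subset h2).2 rfl
    obtain ⟨ℓ, u, hu1, hu2⟩ :=
      geometric_hahn_banach_point_closed (convex_convexHull ℝ _) hclosed hnot
    obtain ⟨A, B, hrep⟩ : ∃ A B : ℝ, ∀ z : ℝ × ℝ,
        ℓ z = A * (rot θ z).1 + B * (rot θ z).2 := by
      refine ⟨ℓ (1, 0) * Real.cos θ - ℓ (0, 1) * Real.sin θ,
        ℓ (1, 0) * Real.sin θ + ℓ (0, 1) * Real.cos θ, fun z => ?_⟩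
      have hz : z = z.1 • ((1 : ℝ), (0 : ℝ)) + z.2 • ((0 : ℝ), (1 : ℝ)) := by
        simp [Prod.ext_iff]
      have hlz : ℓ z = ℓ (1, 0) * z.1 + ℓ (0, 1) * z.2 := by
        conv_lhs => rw [hz]
        rw [map_add, map_smul, map_smul, smul_eq_mul, smul_eq_mul]
        ring
      rw [hlz]
      simp only [rot]
      linear_combination (-(ℓ (1, 0) * z.1 + ℓ (0, 1) * z.2)) * (Real.sin_sq_add_cos_sq θ)
    -- chord inequality core
    have hcore : ∀ q ∈ (S : Set (ℝ × ℝ)) \ {p}, ∀ r ∈ (S : Set (ℝ × ℝ)) \ {p},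
        (rot θ q).1 < (rot θ p).1 → (rot θ p).1 < (rot θ r).1 →
        B * (rot θ p).2 < B * (((1 - ((rot θ p).1 - (rot θ q).1) / ((rot θ r).1 - (rot θ q).1)) *
          (rot θ q).2 + (((rot θ p).1 - (rot θ q).1) / ((rot θ r).1 - (rot θ q).1)) *
          (rot θ r).2)) := by
      intro q hq r hr h1 h2
      set t0 := ((rot θ p).1 - (rot θ q).1) / ((rot θ r).1 - (rot θ q).1) with ht0
      have hd : 0 < (rot θ r).1 - (rot θ q).1 := by linarith
      have ht01 : 0 < t0 := div_pos (by linarith) hd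
      have ht02 : t0 < 1 := (div_lt_one hd).2 (by linarith)
      have hw : (1 - t0) • q + t0 • r ∈ convexHull ℝ ((S : Set (ℝ × ℝ)) \ {p}) :=
        (convex_convexHull ℝ _) (subset_convexHull ℝ _ hq) (subset_convexHull ℝ _ hr)
          (by linarith) (by linarith) (by ring)
      have hℓw := hu2 _ hw
      have hrotw : rot θ ((1 - t0) • q + t0 • r) =
          ((1 - t0) * (rot θ q).1 + t0 * (rot θ r).1,
           (1 - t0) * (rot θ q).2 + t0 * (rot θ r).2) := by
        simp only [rot, Prod.ext_iff, Prod.fst_add, Prod.snd_add, Prod.smul_fst, Prod.smul_snd,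
          smul_eq_mul]
        constructor <;> ring
      have ht0d : t0 * ((rot θ r).1 - (rot θ q).1) = (rot θ p).1 - (rot θ q).1 :=
        div_mul_cancel₀ _ hd.ne'
      have hxw : (1 - t0) * (rot θ q).1 + t0 * (rot θ r).1 = (rot θ p).1 := by
        linear_combination ht0d
      have hrw := hrep ((1 - t0) • q + t0 • r)
      rw [hrotw] at hrw
      simp only at hrw
      rw [hxw] at hrw
      have hℓp := hrep p
      have := lt_trans hu1 hℓw
      rw [hℓp, hrw] at this
      linarith
    rcases lt_trichotomy B 0 with hB | hB | hB
    · right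
      intro q hq r hr h1 h2
      have hqne : q ≠ p := fun h => absurd h1 (by rw [h]; exact lt_irrefl _)
      have hrne : r ≠ p := fun h => absurd h2 (by rw [h]; exact lt_irrefl _)
      have hc := hcore q ⟨hq, hqne⟩ r ⟨hr, hrne⟩ h1 h2
      have hd : 0 < (rot θ r).1 - (rot θ q).1 := by linarith
      have ht0d : (((rot θ p).1 - (rot θ q).1) / ((rot θ r).1 - (rot θ q).1)) *
          ((rot θ r).1 - (rot θ q).1) = (rot θ p).1 - (rot θ q).1 := div_mul_cancel₀ _ hd.ne'
      have h3 : (1 - ((rot θ p).1 - (rot θ q).1) / ((rot θ r).1 - (rot θ q).1)) * (rot θ q).2 +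
          (((rot θ p).1 - (rot θ q).1) / ((rot θ r).1 - (rot θ q).1)) * (rot θ r).2
          < (rot θ p).2 := (mul_lt_mul_left_of_neg hB).1 hc
      have h4 := mul_lt_mul_of_pos_right h3 hd
      have h5 : ((rot θ p).1 - (rot θ q).1) / ((rot θ r).1 - (rot θ q).1) *
          ((rot θ r).1 - (rot θ q).1) * ((rot θ r).2 - (rot θ q).2) =
          ((rot θ p).1 - (rot θ q).1) * ((rot θ r).2 - (rot θ q).2) := by rw [ht0d]
      nlinarith [h4, h5]
    · -- B = 0
      obtain ⟨q₀, hq₀⟩ := hA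
      have h0 := lt_trans hu1 (hu2 q₀ (subset_convexHull ℝ _ hq₀))
      rw [hrep p, hrep q₀, hB] at h0
      simp only [zero_mul, add_zero] at h0
      have hAne : A ≠ 0 := by
        intro h; rw [h] at h0; simp at h0
      have hxall : ∀ z ∈ (S : Set (ℝ × ℝ)) \ {p}, A * (rot θ p).1 < A * (rot θ z).1 := by
        intro z hz
        have := lt_trans hu1 (hu2 z (subset_convexHull ℝ _ hz))
        rw [hrep p, hrep z, hB] at this
        simp only [zero_mul, add_zero] at this
        exact this
      rcases hAne.lt_or_gt with hA' | hA'
      · left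
        intro q hq r hr h1 h2
        exfalso
        have hrne : r ≠ p := fun h => absurd h2 (by rw [h]; exact lt_irrefl _)
        have := hxall r ⟨hr, hrne⟩
        have := (mul_lt_mul_left_of_neg hA').1 this
        linarith
      · left
        intro q hq r hr h1 h2
        exfalso
        have hqne : q ≠ p := fun h => absurd h1 (by rw [h]; exact lt_irrefl _)
        have := hxall q ⟨hq, hqne⟩
        have := (mul_lt_mul_iff_right₀ hA').1 this
        linarith
    · left
      intro q hq r hr h1 h2
      have hqne : q ≠ p := fun h => absurd h1 (by rw [h]; exact lt_irrefl _)
      have hrne : r ≠ p := fun h => absurd h2 (by rw [h]; exact lt_irrefl _)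
      have hc := hcore q ⟨hq, hqne⟩ r ⟨hr, hrne⟩ h1 h2
      have hd : 0 < (rot θ r).1 - (rot θ q).1 := by linarith
      have ht0d : (((rot θ p).1 - (rot θ q).1) / ((rot θ r).1 - (rot θ q).1)) *
          ((rot θ r).1 - (rot θ q).1) = (rot θ p).1 - (rot θ q).1 := div_mul_cancel₀ _ hd.ne'
      have h3 : (rot θ p).2 <
          (1 - ((rot θ p).1 - (rot θ q).1) / ((rot θ r).1 - (rot θ q).1)) * (rot θ q).2 +
          (((rot θ p).1 - (rot θ q).1) / ((rot θ r).1 - (rot θ q).1)) * (rot θ r).2 :=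
        (mul_lt_mul_iff_right₀ hB).1 hc
      have h4 := mul_lt_mul_of_pos_right h3 hd
      have h5 : ((rot θ p).1 - (rot θ q).1) / ((rot θ r).1 - (rot θ q).1) *
          ((rot θ r).1 - (rot θ q).1) * ((rot θ r).2 - (rot θ q).2) =
          ((rot θ p).1 - (rot θ q).1) * ((rot θ r).2 - (rot θ q).2) := by rw [ht0d]
      nlinarith [h4, h5]
  · left
    intro q hq r hr h1 h2
    exfalso
    have hqne : q ≠ p := fun h => absurd h1 (by rw [h]; exact lt_irrefl _)
    exact hA ⟨q, hq, hqne⟩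


/-- Any finite strictly convex planar set splits into three parts, each of which, after a
rotation, lies on the graph of a strictly convex function whose translates pairwise meet
in at most one point. -/
theorem stmt12 (S : Finset (ℝ × ℝ))
    (hS : ∀ p ∈ S, p ∈ Set.extremePoints ℝ (convexHull ℝ (S : Set (ℝ × ℝ)))) :
    ∃ S₁ S₂ S₃ : Finset (ℝ × ℝ),
      S₁ ∪ S₂ ∪ S₃ = S ∧ Disjoint S₁ S₂ ∧ Disjoint S₁ S₃ ∧ Disjoint S₂ S₃ ∧
      ∀ Si ∈ [S₁, S₂, S₃], ∃ (θ : ℝ) (f : ℝ → ℝ),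
        StrictConvexOn ℝ Set.univ f ∧ Continuous f ∧
        (∀ v : ℝ × ℝ, v ≠ 0 → {x : ℝ | f x = f (x - v.1) + v.2}.Subsingleton) ∧
        ∀ p ∈ Si, (rot θ p).2 = f (rot θ p).1 := by
  classical
  obtain ⟨t, ht⟩ := Infinite.exists_notMem_finset
    ((S ×ˢ S).image (fun pq : (ℝ × ℝ) × (ℝ × ℝ) => (pq.1.1 - pq.2.1) / (pq.1.2 - pq.2.2)))
  set θ := Real.arctan t with hθ
  have hcos : 0 < Real.cos θ := Real.cos_arctan_pos t
  have hsin : Real.sin θ = t * Real.cos θ := by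
    have h := Real.tan_arctan t
    rw [Real.tan_eq_sin_div_cos] at h
    rw [div_eq_iff (Real.cos_arctan_pos t).ne'] at h
    rw [← hθ] at h
    exact h
  have hx : ∀ p ∈ S, ∀ q ∈ S, p ≠ q → (rot θ p).1 ≠ (rot θ q).1 := by
    intro p hp q hq hne heq
    simp only [rot] at heq
    have h2 : Real.cos θ * (p.1 - q.1) = Real.sin θ * (p.2 - q.2) := by linear_combination heq
    rw [hsin] at h2
    have h1 : p.1 - q.1 = t * (p.2 - q.2) := by
      apply mul_left_cancel₀ hcos.ne'
      linear_combination h2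
    by_cases hb : p.2 - q.2 = 0
    · apply hne
      have hb1 : p.1 - q.1 = 0 := by rw [h1, hb, mul_zero]
      exact Prod.ext (by linarith) (by linarith)
    · apply ht
      apply Finset.mem_image.2
      refine ⟨(p, q), Finset.mem_product.2 ⟨hp, hq⟩, ?_⟩
      show (p.1 - q.1) / (p.2 - q.2) = t
      rw [h1]
      exact mul_div_cancel_right₀ t hb
  have hLowUpp := fun p (hp : p ∈ S) => classify_lemma S θ p hp (hS p hp)
  set S₁ := S.filter (fun p => ∀ q ∈ S, ∀ r ∈ S,
    (rot θ q).1 < (rot θ p).1 → (rot θ p).1 < (rot θ r).1 →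
    ((rot θ p).2 - (rot θ q).2) * ((rot θ r).1 - (rot θ q).1) <
    ((rot θ r).2 - (rot θ q).2) * ((rot θ p).1 - (rot θ q).1)) with hS₁
  refine ⟨S₁, S \ S₁, ∅, ?_, Finset.disjoint_sdiff, Finset.disjoint_empty_right _,
    Finset.disjoint_empty_right _, ?_⟩
  · rw [Finset.union_empty, Finset.union_sdiff_of_subset (Finset.filter_subset _ _)]
  intro Si hSi
  have hSi' : Si = S₁ ∨ Si = S \ S₁ ∨ Si = ∅ := by simpa using hSi
  rcases hSi' with rfl | rfl | rfl
  · -- lower part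
    have hd1 : ∀ p' ∈ S₁.image (rot θ), ∀ q' ∈ S₁.image (rot θ), p'.1 = q'.1 → p' = q' := by
      intro p' hp' q' hq' h
      obtain ⟨p, hp, rfl⟩ := Finset.mem_image.1 hp'
      obtain ⟨q, hq, rfl⟩ := Finset.mem_image.1 hq'
      rcases eq_or_ne p q with rfl | hne
      · rfl
      · exact absurd h (hx p (Finset.filter_subset _ _ hp) q (Finset.filter_subset _ _ hq) hne)
    have hc1 : ∀ a' ∈ S₁.image (rot θ), ∀ b' ∈ S₁.image (rot θ), ∀ c' ∈ S₁.image (rot θ),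
        a'.1 < b'.1 → b'.1 < c'.1 →
        (b'.2 - a'.2) * (c'.1 - a'.1) < (c'.2 - a'.2) * (b'.1 - a'.1) := by
      intro a' ha' b' hb' c' hc' h1 h2
      obtain ⟨a, ha, rfl⟩ := Finset.mem_image.1 ha'
      obtain ⟨b, hb, rfl⟩ := Finset.mem_image.1 hb'
      obtain ⟨c, hc, rfl⟩ := Finset.mem_image.1 hc'
      exact (Finset.mem_filter.1 hb).2 a (Finset.filter_subset _ _ ha)
        c (Finset.filter_subset _ _ hc) h1 h2
    obtain ⟨f, hf1, hf2, hf3⟩ := interp (S₁.image (rot θ)) hd1 hc1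
    exact ⟨θ, f, hf1, hf2, translate_subsingleton hf1,
      fun p hp => hf3 _ (Finset.mem_image_of_mem _ hp)⟩
  · -- upper part
    have hrotpi : ∀ p : ℝ × ℝ, rot (θ + Real.pi) p = (-(rot θ p).1, -(rot θ p).2) := by
      intro p
      simp only [rot, Real.cos_add_pi, Real.sin_add_pi, Prod.ext_iff]
      constructor <;> ring
    have hUpp : ∀ b ∈ S \ S₁, ∀ q ∈ S, ∀ r ∈ S,
        (rot θ q).1 < (rot θ b).1 → (rot θ b).1 < (rot θ r).1 →
        ((rot θ r).2 - (rot θ q).2) * ((rot θ b).1 - (rot θ q).1) <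
        ((rot θ b).2 - (rot θ q).2) * ((rot θ r).1 - (rot θ q).1) := by
      intro b hb
      obtain ⟨hbS, hbn⟩ := Finset.mem_sdiff.1 hb
      rcases hLowUpp b hbS with hl | hu
      · exact absurd (Finset.mem_filter.2 ⟨hbS, hl⟩) hbn
      · exact hu
    have hd2 : ∀ p' ∈ (S \ S₁).image (rot (θ + Real.pi)),
        ∀ q' ∈ (S \ S₁).image (rot (θ + Real.pi)), p'.1 = q'.1 → p' = q' := by
      intro p' hp' q' hq' h
      obtain ⟨p, hp, rfl⟩ := Finset.mem_image.1 hp'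
      obtain ⟨q, hq, rfl⟩ := Finset.mem_image.1 hq'
      rcases eq_or_ne p q with rfl | hne
      · rfl
      · rw [hrotpi p, hrotpi q] at h
        simp only [neg_inj] at h
        exact absurd h (hx p (Finset.mem_sdiff.1 hp).1 q (Finset.mem_sdiff.1 hq).1 hne)
    have hc2 : ∀ a' ∈ (S \ S₁).image (rot (θ + Real.pi)),
        ∀ b' ∈ (S \ S₁).image (rot (θ + Real.pi)), ∀ c' ∈ (S \ S₁).image (rot (θ + Real.pi)),
        a'.1 < b'.1 → b'.1 < c'.1 →
        (b'.2 - a'.2) * (c'.1 - a'.1) < (c'.2 - a'.2) * (b'.1 - a'.1) := by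
      intro a' ha' b' hb' c' hc' h1 h2
      obtain ⟨a, ha, rfl⟩ := Finset.mem_image.1 ha'
      obtain ⟨b, hb, rfl⟩ := Finset.mem_image.1 hb'
      obtain ⟨c, hc, rfl⟩ := Finset.mem_image.1 hc'
      simp only [hrotpi] at h1 h2 ⊢
      have h1' : (rot θ b).1 < (rot θ a).1 := by simpa using h1
      have h2' : (rot θ c).1 < (rot θ b).1 := by simpa using h2
      have hu := hUpp b hb c (Finset.mem_sdiff.1 hc).1 a (Finset.mem_sdiff.1 ha).1 h2' h1'
      nlinarith [hu]
    obtain ⟨f, hf1, hf2, hf3⟩ := interp ((S \ S₁).image (rot (θ + Real.pi))) hd2 hc2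
    exact ⟨θ + Real.pi, f, hf1, hf2, translate_subsingleton hf1,
      fun p hp => hf3 _ (Finset.mem_image_of_mem _ hp)⟩
  · -- empty part
    refine ⟨0, fun x => x ^ 2, Even.strictConvexOn_pow even_two two_ne_zero, continuous_pow 2,
      translate_subsingleton (Even.strictConvexOn_pow even_two two_ne_zero), ?_⟩
    intro p hp
    exact absurd hp (Finset.notMem_empty p)
end
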